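/- Let R be a number ring and I a nonzero ideal of R, and let 𝔭 be a maximal ideal of R. Then N(𝔭I) ≥ N(I)·N(𝔭). -/

import Mathlib

set_option synthInstance.maxHeartbeats 1000000
set_option maxHeartbeats 1000000

open Ideal Polynomial

section Aux

variable {K : Type*} [Field K] [NumberField K] {R : Subring K}

private lemma aux_strip (x : K) (hx : x ≠ 0) :
    ∀ (n : ℕ) (p : Polynomial ℤ), p.natDegree ≤ n → p ≠ 0 → Polynomial.aeval x p = 0 →
      ∃ q : Polynomial ℤ, q.coeff 0 ≠ 0 ∧ Polynomial.aeval x q = 0 := by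
  intro n
  induction n with
  | zero =>
    intro p hdeg hp0 hev
    refine ⟨p, fun hc => hp0 ?_, hev⟩
    have := Polynomial.eq_C_of_natDegree_eq_zero (Nat.le_zero.mp hdeg)
    rw [this, hc, map_zero]
  | succ n ih =>
    intro p hdeg hp0 hev
    by_cases hc : p.coeff 0 ≠ 0
    · exact ⟨p, hc, hev⟩
    · push_neg at hc
      have hdiv : Polynomial.X * p.divX = p := by
        have := Polynomial.X_mul_divX_add p
        rwa [hc, Polynomial.C_0, add_zero] at this
      have hdvx0 : p.divX ≠ 0 := by
        intro h
        rw [← hdiv, h, mul_zero] at hp0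
        exact hp0 rfl
      have hevd : Polynomial.aeval x p.divX = 0 := by
        have : Polynomial.aeval x (Polynomial.X * p.divX) = 0 := by rw [hdiv]; exact hev
        rw [_root_.map_mul, Polynomial.aeval_X] at this
        rcases mul_eq_zero.mp this with h | h
        · exact absurd h hx
        · exact h
      refine ih p.divX ?_ hdvx0 hevd
      have := Polynomial.natDegree_divX_eq_natDegree_tsub_one (p := p)
      omega

private lemma aux_exists_int (J : Ideal ↥R) (hJ : J ≠ ⊥) :
    ∃ N : ℤ, N ≠ 0 ∧ ((N : ↥R)) ∈ J := by
  obtain ⟨x, hxJ, hx0⟩ := Submodule.exists_mem_ne_zero_of_ne_bot hJ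
  have hxK : (x : K) ≠ 0 := fun h => hx0 (Subtype.coe_injective h)
  haveI := Algebra.IsAlgebraic.of_finite ℚ K
  obtain ⟨p, hp0, hpx⟩ := (IsFractionRing.isAlgebraic_iff ℤ ℚ K).mpr
    (Algebra.IsAlgebraic.isAlgebraic (x : K))
  obtain ⟨q, hq0, hqx⟩ := aux_strip (x : K) hxK p.natDegree p le_rfl hp0 hpx
  -- aeval x q = 0 in ↥R
  have hevR : Polynomial.aeval x q = 0 := by
    apply Subtype.coe_injective
    have := Polynomial.aeval_algHom_apply (R.subtype.toIntAlgHom) x q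
    simpa using this.symm.trans hqx
  have key : ((q.coeff 0 : ℤ) : ↥R) = - (x * Polynomial.aeval x q.divX) := by
    have h1 := congrArg (Polynomial.aeval x) (Polynomial.X_mul_divX_add q)
    rw [map_add, _root_.map_mul, Polynomial.aeval_X, Polynomial.aeval_C, hevR] at h1
    have : algebraMap ℤ ↥R (q.coeff 0) = ((q.coeff 0 : ℤ) : ↥R) := by
      simp [algebraMap_int_eq, eq_intCast]
    rw [this] at h1
    linear_combination h1
  refine ⟨q.coeff 0, hq0, ?_⟩
  rw [key]
  exact J.neg_mem (J.mul_mem_right _ hxJ)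

private lemma aux_desc (p : ℕ) (hp : p.Prime) {ι : Type*} (t : Finset ι) (w : ι → ↥R)
    (H : ∀ g : ι → ℤ, (∑ i ∈ t, g i • w i = 0) → ∀ i ∈ t, (p : ℤ) ∣ g i) :
    ∀ (n : ℕ) (g : ι → ℤ), (∑ i ∈ t, g i • w i = 0) → ∀ i ∈ t, (g i).natAbs ≤ n → g i = 0 := by
  intro n
  induction n using Nat.strong_induction_on with
  | _ n ih =>
    intro g hg i hit hle
    have hdvd := H g hg
    set g' : ι → ℤ := fun j => g j / p with hg'
    have hmul : ∀ j ∈ t, g j = p * g' j := fun j hj => (Int.mul_ediv_cancel' (hdvd j hj)).symm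
    rcases eq_or_ne (g' i) 0 with h0 | h0
    · rw [hmul i hit, h0, mul_zero]
    · have hrel' : ∑ j ∈ t, g' j • w j = 0 := by
        have hs : (p : ℤ) • ∑ j ∈ t, g' j • w j = 0 := by
          rw [Finset.smul_sum, ← hg]
          exact Finset.sum_congr rfl fun j hj => by rw [smul_smul, ← hmul j hj]
        have := hs
        rw [zsmul_eq_mul] at this
        rcases mul_eq_zero.mp this with h | h
        · exfalso
          have : ((p : ℤ) : ↥R) ≠ 0 := by
            exact_mod_cast (Int.natCast_ne_zero.mpr hp.ne_zero : (p : ℤ) ≠ 0)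
          exact this h
        · exact h
      have hlt : (g' i).natAbs < n := by
        have h1 : (g i).natAbs = p * (g' i).natAbs := by
          rw [hmul i hit, Int.natAbs_mul, Int.natAbs_natCast]
        have hp2 := hp.two_le
        have hne : (g' i).natAbs ≠ 0 := fun h => h0 (Int.natAbs_eq_zero.mp h)
        calc (g' i).natAbs < p * (g' i).natAbs := by
              have := Nat.pos_of_ne_zero hne
              nlinarith
          _ = (g i).natAbs := h1.symm
          _ ≤ n := hle
      have := ih (g' i).natAbs hlt g' hrel' i hit le_rfl
      rw [hmul i hit, this, mul_zero]

private lemma aux_finite_prime (p : ℕ) (hp : p.Prime) :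
    Finite (↥R ⧸ (Ideal.span {((p : ℕ) : ↥R)} : Ideal ↥R)) := by
  set Z : Ideal ↥R := Ideal.span {((p : ℕ) : ↥R)} with hZdef
  rcases subsingleton_or_nontrivial (↥R ⧸ Z) with h | h
  · exact Finite.of_subsingleton
  haveI : Fact p.Prime := ⟨hp⟩
  have hp0 : ((p : ℕ) : ↥R ⧸ Z) = 0 := by
    rw [← map_natCast (Ideal.Quotient.mk Z) p]
    exact Ideal.Quotient.eq_zero_iff_mem.mpr (Ideal.subset_span (Set.mem_singleton _))
  haveI hchar : CharP (↥R ⧸ Z) p := (CharP.charP_iff_prime_eq_zero hp).mpr hp0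
  letI alg : Algebra (ZMod p) (↥R ⧸ Z) := ZMod.algebra _ _
  letI mod : Module (ZMod p) (↥R ⧸ Z) := Algebra.toModule
  have hrank : Module.rank (ZMod p) (↥R ⧸ Z) ≤ (Module.finrank ℚ K : Cardinal) := by
    apply rank_le
    intro s hs
    classical
    let L : (↥R ⧸ Z) → ↥R := Function.surjInv Ideal.Quotient.mk_surjective
    have hL : ∀ z, Ideal.Quotient.mk Z (L z) = z := Function.surjInv_eq _
    let v : s → K := fun i => ((L i : ↥R) : K)
    have hindZ : LinearIndependent ℤ v := by
      rw [linearIndependent_iff']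
      intro t g hrel i hit
      have H : ∀ g : s → ℤ, (∑ j ∈ t, g j • (L ∘ Subtype.val) j = 0) →
          ∀ j ∈ t, (p : ℤ) ∣ g j := by
        intro g hg j hjt
        have hS : ∑ k ∈ t, ((g k : ZMod p)) • ((k : s) : ↥R ⧸ Z) = 0 := by
          have := congrArg (Ideal.Quotient.mk Z) hg
          rw [map_sum, map_zero] at this
          rw [← this]
          refine Finset.sum_congr rfl fun k hk => ?_
          rw [Int.cast_smul_eq_zsmul]
          rw [zsmul_eq_mul, zsmul_eq_mul, _root_.map_mul]
          congr 1
          exact (hL _).symm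
        have := linearIndependent_iff'.mp hs t (fun k => ((g k : ZMod p))) hS j hjt
        exact (ZMod.intCast_zmod_eq_zero_iff_dvd _ _).mp this
      have hg0 : ∑ j ∈ t, g j • (L ∘ Subtype.val) j = 0 := by
        apply Subtype.coe_injective
        push_cast
        rw [← hrel]
        refine Finset.sum_congr rfl fun k hk => ?_
        simp [v]
      exact aux_desc p hp t (L ∘ Subtype.val) H ((g i).natAbs) g hg0 i hit le_rfl
    have hindQ : LinearIndependent ℚ v := (LinearIndependent.iff_fractionRing ℤ ℚ).mp hindZ
    simpa [Fintype.card_coe] using hindQ.fintype_card_le_finrank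
  haveI : Module.Finite (ZMod p) (↥R ⧸ Z) := by
    rw [← Module.rank_lt_aleph0_iff]
    exact hrank.trans_lt (Cardinal.nat_lt_aleph0 _)
  exact Module.finite_of_finite (ZMod p)

private lemma aux_mk_out {J : Ideal ↥R} (y : ↥R ⧸ J) :
    Ideal.Quotient.mk J (Quotient.out y) = y :=
  Quotient.out_eq' y

private lemma aux_mul (a b : ↥R)
    (ha : Finite (↥R ⧸ (Ideal.span {a} : Ideal ↥R)))
    (hb : Finite (↥R ⧸ (Ideal.span {b} : Ideal ↥R))) :
    Finite (↥R ⧸ (Ideal.span {a * b} : Ideal ↥R)) := by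
  set Zab : Ideal ↥R := Ideal.span {a * b} with hZab
  set Za : Ideal ↥R := Ideal.span {a} with hZa
  set Zb : Ideal ↥R := Ideal.span {b} with hZb
  have hle : Zab ≤ Za := Ideal.span_singleton_le_span_singleton.mpr (dvd_mul_right a b)
  set f := Ideal.Quotient.factor hle with hf
  have hfs : Function.Surjective f := by
    intro y
    obtain ⟨x, rfl⟩ := Ideal.Quotient.mk_surjective y
    exact ⟨Ideal.Quotient.mk Zab x, Ideal.Quotient.factor_mk _ _⟩
  set kf : AddSubgroup (↥R ⧸ Zab) := (f.toAddMonoidHom).ker with hkf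
  have hmem : ∀ u : ↥R, Ideal.Quotient.mk Zab (a * u) ∈ kf := by
    intro u
    rw [AddMonoidHom.mem_ker]
    show f (Ideal.Quotient.mk Zab (a * u)) = 0
    rw [hf, Ideal.Quotient.factor_mk]
    exact Ideal.Quotient.eq_zero_iff_mem.mpr (Ideal.mem_span_singleton.mpr (dvd_mul_right a u))
  haveI hker : Finite kf := by
    have hsurj : Function.Surjective (fun y : ↥R ⧸ Zb =>
        (⟨Ideal.Quotient.mk Zab (a * Quotient.out y), hmem _⟩ : kf)) := by
      rintro ⟨z, hz⟩
      obtain ⟨x, rfl⟩ := Ideal.Quotient.mk_surjective z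
      rw [AddMonoidHom.mem_ker] at hz
      have hz' : Ideal.Quotient.mk Za x = 0 := by
        have h3 : f (Ideal.Quotient.mk Zab x) = 0 := hz
        rwa [hf, Ideal.Quotient.factor_mk] at h3
      obtain ⟨u, hu⟩ := Ideal.mem_span_singleton'.mp (Ideal.Quotient.eq_zero_iff_mem.mp hz')
      refine ⟨Ideal.Quotient.mk Zb u, ?_⟩
      apply Subtype.ext
      show Ideal.Quotient.mk Zab (a * Quotient.out (Ideal.Quotient.mk Zb u)) =
        Ideal.Quotient.mk Zab x
      rw [Ideal.Quotient.eq]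
      have hout : Quotient.out (Ideal.Quotient.mk Zb u) - u ∈ Zb := by
        rw [← Ideal.Quotient.eq]
        exact aux_mk_out _
      obtain ⟨c, hc⟩ := Ideal.mem_span_singleton'.mp hout
      rw [← hu]
      have h2 : a * Quotient.out (Ideal.Quotient.mk Zb u) - u * a = c * (a * b) := by
        linear_combination (-a) * hc
      rw [h2]
      exact Ideal.mem_span_singleton'.mpr ⟨c, rfl⟩
    exact Finite.of_surjective _ hsurj
  haveI : Finite ((↥R ⧸ Zab) ⧸ kf) :=
    Finite.of_equiv _ (QuotientAddGroup.quotientKerEquivOfSurjective f.toAddMonoidHom hfs).symm.toEquiv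
  exact Finite.of_addSubgroup_quotient kf

private lemma aux_finite_nat : ∀ n : ℕ, n ≠ 0 → Finite (↥R ⧸ (Ideal.span {(n : ↥R)} : Ideal ↥R)) := by
  intro n
  induction n using Nat.strong_induction_on with
  | _ n ih =>
    intro hn
    rcases eq_or_ne n 1 with rfl | h1
    · haveI : Subsingleton (↥R ⧸ (Ideal.span {((1 : ℕ) : ↥R)} : Ideal ↥R)) := by
        rw [Ideal.Quotient.subsingleton_iff]
        simp [Ideal.span_singleton_one]
      exact Finite.of_subsingleton
    · set p := n.minFac with hpdef
      have hp : p.Prime := Nat.minFac_prime h1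
      set m := n / p with hmdef
      have hdvd : p ∣ n := Nat.minFac_dvd n
      have hm : n = p * m := (Nat.mul_div_cancel' hdvd).symm
      have hm0 : m ≠ 0 := by
        intro h; rw [h, mul_zero] at hm; exact hn hm
      have hmlt : m < n := Nat.div_lt_self (Nat.pos_of_ne_zero hn) hp.one_lt
      have hfin := aux_mul ((p : ↥R)) ((m : ↥R)) (aux_finite_prime p hp) (ih m hmlt hm0)
      have hcast : ((n : ℕ) : ↥R) = (p : ↥R) * (m : ↥R) := by
        rw [hm]; push_cast; ring
      rw [hcast]
      exact hfin

private lemma aux_finite_int (N : ℤ) (hN : N ≠ 0) :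
    Finite (↥R ⧸ (Ideal.span {(N : ↥R)} : Ideal ↥R)) := by
  have habs : (Ideal.span {(N : ↥R)} : Ideal ↥R) = Ideal.span {((N.natAbs : ℕ) : ↥R)} := by
    rcases Int.natAbs_eq N with h | h
    · conv_lhs => rw [h, Int.cast_natCast]
    · conv_lhs => rw [h, Int.cast_neg, Int.cast_natCast, ← Ideal.span_singleton_neg (α := ↥R), neg_neg]
  rw [habs]
  exact aux_finite_nat N.natAbs (Int.natAbs_ne_zero.mpr hN)

private lemma aux_finite_quot (J : Ideal ↥R) (hJ : J ≠ ⊥) : Finite (↥R ⧸ J) := by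
  obtain ⟨N, hN0, hNJ⟩ := aux_exists_int J hJ
  have hle : (Ideal.span {(N : ↥R)} : Ideal ↥R) ≤ J := by
    rwa [Ideal.span_singleton_le_iff_mem]
  haveI := aux_finite_int (R := R) N hN0
  apply Finite.of_surjective (Ideal.Quotient.factor hle)
  intro y
  obtain ⟨x, rfl⟩ := Ideal.Quotient.mk_surjective y
  exact ⟨Ideal.Quotient.mk _ x, Ideal.Quotient.factor_mk _ _⟩

private lemma aux_fg (J : Ideal ↥R) (hJ : J ≠ ⊥) : J.FG := by
  obtain ⟨N, hN0, hNJ⟩ := aux_exists_int J hJ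
  set Z : Ideal ↥R := Ideal.span {(N : ↥R)} with hZ
  have hle : Z ≤ J := by rw [hZ]; rwa [Ideal.span_singleton_le_iff_mem]
  haveI : Finite (↥R ⧸ Z) := aux_finite_int (R := R) N hN0
  apply Submodule.fg_of_fg_map_of_fg_inf_ker (Submodule.mkQ Z)
  · exact IsNoetherian.noetherian _
  · rw [Submodule.ker_mkQ, inf_eq_right.mpr hle]
    exact ⟨{(N : ↥R)}, by rw [Finset.coe_singleton]⟩

end Aux

/-- In a number ring `R`, for any nonzero ideal `I` and maximal ideal `𝔭`,
`N(𝔭I) ≥ N(I)·N(𝔭)`. -/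
theorem stmt4 (K : Type*) [Field K] [NumberField K] (R : Subring K)
    (I : Ideal ↥R) (hI : I ≠ ⊥) (𝔭 : Ideal ↥R) (h𝔭 : 𝔭.IsMaximal) :
    Nat.card (↥R ⧸ I) * Nat.card (↥R ⧸ 𝔭) ≤ Nat.card (↥R ⧸ (𝔭 * I)) := by
  rcases eq_or_ne 𝔭 ⊥ with rfl | hp0
  · have hinj : Function.Injective (Ideal.Quotient.mk (⊥ : Ideal ↥R)) := by
      intro x y h
      have := Ideal.Quotient.eq.mp h
      simpa [sub_eq_zero] using this
    haveI : Infinite (↥R ⧸ (⊥ : Ideal ↥R)) := Infinite.of_injective _ hinj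
    rw [show Nat.card (↥R ⧸ (⊥ : Ideal ↥R)) = 0 from Nat.card_eq_zero_of_infinite, mul_zero]
    exact Nat.zero_le _
  · have hJ : 𝔭 * I ≠ ⊥ := by
      intro h
      rcases Ideal.mul_eq_bot.mp h with h' | h'
      · exact hp0 h'
      · exact hI h'
    haveI hfinJ : Finite (↥R ⧸ (𝔭 * I)) := aux_finite_quot _ hJ
    have hlePI : 𝔭 * I ≤ I := Ideal.mul_le_right
    have hleP : 𝔭 * I ≤ 𝔭 := Ideal.mul_le_left
    -- I is not contained in 𝔭 * I
    have hne : ¬ I ≤ 𝔭 * I := by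
      intro hle
      obtain ⟨r, hr1, hr2⟩ :=
        Submodule.exists_sub_one_mem_and_smul_eq_zero_of_fg_of_le_smul 𝔭 I
          (aux_fg I hI) (by rwa [Ideal.smul_eq_mul])
      obtain ⟨x, hxI, hx0⟩ := Submodule.exists_mem_ne_zero_of_ne_bot hI
      have := hr2 x hxI
      rw [smul_eq_mul] at this
      rcases mul_eq_zero.mp this with h | h
      · rw [h] at hr1
        simp only [zero_sub] at hr1
        have h1 : (1 : ↥R) ∈ 𝔭 := by
          have := 𝔭.neg_mem hr1; simpa using this
        exact h𝔭.ne_top ((Ideal.eq_top_iff_one 𝔭).mpr h1)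
      · exact hx0 h
    obtain ⟨a, haI, haPI⟩ := SetLike.not_le_iff_exists.mp hne
    -- factor map
    set f := Ideal.Quotient.factor hlePI with hf
    have hfs : Function.Surjective f := by
      intro y
      obtain ⟨x, rfl⟩ := Ideal.Quotient.mk_surjective y
      exact ⟨Ideal.Quotient.mk _ x, Ideal.Quotient.factor_mk _ _⟩
    set kf : AddSubgroup (↥R ⧸ (𝔭 * I)) := (f.toAddMonoidHom).ker with hkf
    have e1 : Nat.card (↥R ⧸ (𝔭 * I)) = Nat.card (↥R ⧸ I) * Nat.card kf := by
      rw [AddSubgroup.card_eq_card_quotient_mul_card_addSubgroup kf]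
      congr 1
      exact Nat.card_congr
        (QuotientAddGroup.quotientKerEquivOfSurjective f.toAddMonoidHom hfs).toEquiv
    -- injection from ↥R ⧸ 𝔭 into kf
    have e2 : Nat.card (↥R ⧸ 𝔭) ≤ Nat.card kf := by
      have hmem : ∀ y : ↥R ⧸ 𝔭, Ideal.Quotient.mk (𝔭 * I) (Quotient.out y * a) ∈ kf := by
        intro y
        rw [hkf, AddMonoidHom.mem_ker]
        show f (Ideal.Quotient.mk (𝔭 * I) (Quotient.out y * a)) = 0
        rw [hf, Ideal.Quotient.factor_mk]
        exact Ideal.Quotient.eq_zero_iff_mem.mpr (I.mul_mem_left _ haI)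
      haveI : Finite kf := Subtype.finite
      apply Nat.card_le_card_of_injective
        (fun y : ↥R ⧸ 𝔭 => (⟨Ideal.Quotient.mk (𝔭 * I) (Quotient.out y * a), hmem y⟩ : kf))
      intro y y' h
      have h2 : (Quotient.out y - Quotient.out y') * a ∈ 𝔭 * I := by
        have := Subtype.ext_iff.mp h
        simp only at this
        have h3 := Ideal.Quotient.eq.mp this
        rwa [← sub_mul] at h3
      have hd : Quotient.out y - Quotient.out y' ∈ 𝔭 := by
        by_contra hd
        obtain ⟨c, i, hi𝔭, hci⟩ := h𝔭.exists_inv hd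
        -- a = (c * d) * a + i * a  where  c * d + i = 1
        have ha : a = c * ((Quotient.out y - Quotient.out y') * a) + i * a := by
          have : (c * (Quotient.out y - Quotient.out y') + i) * a = 1 * a := by rw [hci]
          linear_combination -this
        have : a ∈ 𝔭 * I := by
          rw [ha]
          exact Ideal.add_mem _ ((𝔭 * I).mul_mem_left c h2)
            (Ideal.mul_mem_mul hi𝔭 haI)
        exact haPI this
      calc y = Ideal.Quotient.mk 𝔭 (Quotient.out y) := (Quotient.out_eq' y).symm
        _ = Ideal.Quotient.mk 𝔭 (Quotient.out y') := Ideal.Quotient.eq.mpr hd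
        _ = y' := Quotient.out_eq' y'
    calc Nat.card (↥R ⧸ I) * Nat.card (↥R ⧸ 𝔭)
        ≤ Nat.card (↥R ⧸ I) * Nat.card kf := Nat.mul_le_mul_left _ e2
      _ = Nat.card (↥R ⧸ (𝔭 * I)) := e1.symm
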